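/- Let C ≥ 2 and let μ_1,…,μ_C ∈ ℝ^d form a centered simplex ETF with radius R > 0, and let P denote the orthogonal projection of ℝ^d onto span(μ_1,…,μ_C). Then for every z ∈ ℝ^d with ‖z‖ = 1, the class-wise variance of squared distances equals Var_c[‖z − μ_c‖²] = (4R²/(C−1))·‖P(z)‖². -/

import Mathlib

open scoped RealInnerProductSpace
open Finset

/-- Variance of a finite family of reals indexed by `Fin C`. -/
noncomputable def varFam {C : ℕ} (a : Fin C → ℝ) : ℝ :=
  (1 / (C : ℝ)) * ∑ c, (a c - (1 / (C : ℝ)) * ∑ c', a c') ^ 2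

lemma frame_op {d C : ℕ} (hC : 2 ≤ C) (R : ℝ)
    (μ : Fin C → EuclideanSpace ℝ (Fin d))
    (hnorm : ∀ c, ‖μ c‖ = R)
    (hangle : ∀ c c', c ≠ c' → ⟪μ c, μ c'⟫ = -R ^ 2 / ((C : ℝ) - 1))
    (hsum : ∑ c, μ c = 0) :
    ∀ x ∈ Submodule.span ℝ (Set.range μ),
      ∑ c, ⟪x, μ c⟫ • μ c = (R ^ 2 * C / ((C : ℝ) - 1)) • x := by
  have hC1 : ((C : ℝ) - 1) ≠ 0 := by
    have : (2 : ℝ) ≤ (C : ℝ) := by exact_mod_cast hC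
    linarith
  intro x hx
  induction hx using Submodule.span_induction with
  | mem x hx =>
      obtain ⟨a, rfl⟩ := hx
      have herase : ∑ c ∈ univ.erase a, μ c = -μ a := by
        have := Finset.add_sum_erase univ μ (mem_univ a)
        rw [hsum] at this
        linear_combination (norm := module) this
      rw [← Finset.add_sum_erase univ _ (mem_univ a)]
      have h1 : ⟪μ a, μ a⟫ = R ^ 2 := by
        rw [real_inner_self_eq_norm_sq, hnorm]
      have h2 : ∑ c ∈ univ.erase a, ⟪μ a, μ c⟫ • μ c
          = (-R ^ 2 / ((C : ℝ) - 1)) • ∑ c ∈ univ.erase a, μ c := by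
        rw [Finset.smul_sum]
        apply Finset.sum_congr rfl
        intro c hc
        rw [hangle a c (Ne.symm (Finset.ne_of_mem_erase hc))]
      rw [h1, h2, herase, smul_neg, ← sub_eq_add_neg, ← sub_smul]
      congr 1
      field_simp
      ring
  | zero => simp
  | add x y hx hy ihx ihy =>
      simp only [inner_add_left, add_smul, Finset.sum_add_distrib, ihx, ihy, smul_add]
  | smul r x hx ihx =>
      simp only [inner_smul_left, RCLike.conj_to_real, mul_smul, ← Finset.smul_sum, ihx]
      rw [smul_comm]

theorem variance_equals_projection_norm {d C : ℕ} (hC : 2 ≤ C) (R : ℝ) (hR : 0 < R)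
    (μ : Fin C → EuclideanSpace ℝ (Fin d))
    (hnorm : ∀ c, ‖μ c‖ = R)
    (hangle : ∀ c c', c ≠ c' → ⟪μ c, μ c'⟫ = -R ^ 2 / ((C : ℝ) - 1))
    (hsum : ∑ c, μ c = 0)
    (z : EuclideanSpace ℝ (Fin d)) (hznorm : ‖z‖ = 1) :
    varFam (fun c => ‖z - μ c‖ ^ 2)
      = (4 * R ^ 2 / ((C : ℝ) - 1)) *
        ‖(Submodule.orthogonalProjection (Submodule.span ℝ (Set.range μ)) z :
          EuclideanSpace ℝ (Fin d))‖ ^ 2 := by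
  have hC2 : (2 : ℝ) ≤ (C : ℝ) := by exact_mod_cast hC
  have hC0 : (C : ℝ) ≠ 0 := by linarith
  have hC1 : ((C : ℝ) - 1) ≠ 0 := by linarith
  set K := Submodule.span ℝ (Set.range μ) with hK
  set p : EuclideanSpace ℝ (Fin d) := (Submodule.orthogonalProjection K z : EuclideanSpace ℝ (Fin d))
    with hp
  -- inner products with μ c agree for z and p
  have hzp : ∀ w ∈ K, ⟪z - p, w⟫ = 0 := fun w hw =>
    Submodule.starProjection_inner_eq_zero (K := K) z w hw
  have hmem : ∀ c, μ c ∈ K := fun c => Submodule.subset_span ⟨c, rfl⟩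
  have hinner : ∀ c, ⟪z, μ c⟫ = ⟪p, μ c⟫ := by
    intro c
    have := hzp (μ c) (hmem c)
    rw [inner_sub_left] at this
    linarith
  have hpz : ⟪p, z⟫ = ‖p‖ ^ 2 := by
    have h0 : ⟪z - p, p⟫ = 0 := hzp p (Submodule.orthogonalProjection K z).2
    rw [inner_sub_left] at h0
    rw [real_inner_comm, ← real_inner_self_eq_norm_sq]
    linarith
  -- key sum identity
  have hkey : ∑ c, ⟪z, μ c⟫ ^ 2 = (R ^ 2 * C / ((C : ℝ) - 1)) * ‖p‖ ^ 2 := by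
    have hfr : ∑ c, ⟪p, μ c⟫ • μ c = (R ^ 2 * C / ((C : ℝ) - 1)) • p :=
      frame_op hC R μ hnorm hangle hsum p (Submodule.orthogonalProjection K z).2
    have : ⟪∑ c, ⟪p, μ c⟫ • μ c, z⟫ = ∑ c, ⟪z, μ c⟫ ^ 2 := by
      rw [sum_inner]
      apply Finset.sum_congr rfl
      intro c _
      rw [real_inner_smul_left, ← hinner c, real_inner_comm (μ c) z]
      ring
    rw [← this, hfr, real_inner_smul_left, hpz]
  -- sum of inner products is zero
  have hsz : ∑ c, ⟪z, μ c⟫ = 0 := by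
    rw [← inner_sum, hsum, inner_zero_right]
  -- expand squared norms
  have hexp : ∀ c, ‖z - μ c‖ ^ 2 = 1 + R ^ 2 - 2 * ⟪z, μ c⟫ := by
    intro c
    rw [norm_sub_sq_real, hznorm, hnorm]
    ring
  unfold varFam
  simp only [hexp]
  have hmean : (1 / (C : ℝ)) * ∑ c', (1 + R ^ 2 - 2 * ⟪z, μ c'⟫) = 1 + R ^ 2 := by
    rw [Finset.sum_sub_distrib, ← Finset.mul_sum, hsz, Finset.sum_const, card_univ,
      Fintype.card_fin]
    field_simp
    ring
  rw [hmean]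
  have : ∑ c, (1 + R ^ 2 - 2 * ⟪z, μ c⟫ - (1 + R ^ 2)) ^ 2 = 4 * ∑ c, ⟪z, μ c⟫ ^ 2 := by
    rw [Finset.mul_sum]
    apply Finset.sum_congr rfl
    intro c _
    ring
  rw [this, hkey]
  field_simp
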